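/- For every ξ in the convex hull of {P_1,…,P_N}, the Legendre transform of f satisfies f̂(ξ) = inf { t ∈ ℝ : (ξ, t) ∈ conv{(P_1, −c_1), …, (P_N, −c_N)} }, where (P_i, −c_i) ∈ ℝⁿ × ℝ is the lifted point. (In other words, the graph of f̂ over the convex hull of the P_i is the lower convex hull, with respect to the last coordinate direction, of the lifted points (P_i, −c_i).) -/

import Mathlib

open scoped RealInnerProductSpace

/-- over the convex hull of the `P_i`, the graph of the Legendre
transform of `f` is the lower convex hull of the lifted points `(P_i, −c_i)`:
`f̂(ξ) = inf { t : (ξ,t) ∈ conv{(P_i, −c_i)} }`. -/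
theorem legendre_transform_graph_is_lower_hull
    (n N : ℕ) (hN : 1 ≤ N)
    (P : Fin N → EuclideanSpace ℝ (Fin n)) (w : Fin N → ℝ)
    (c : Fin N → ℝ) (hc : ∀ i, c i = -((‖P i‖ ^ 2 - w i) / 2))
    (fi : Fin N → EuclideanSpace ℝ (Fin n) → ℝ)
    (hfi : ∀ i x, fi i x = ⟪x, P i⟫ + c i)
    (f : EuclideanSpace ℝ (Fin n) → ℝ)
    (hf : ∀ x, IsGreatest (Set.range fun i => fi i x) (f x))
    (ξ : EuclideanSpace ℝ (Fin n)) (hξ : ξ ∈ convexHull ℝ (Set.range P)) :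
    (⨆ x, (⟪ξ, x⟫ - f x)) =
      sInf {t : ℝ | (ξ, t) ∈ convexHull ℝ (Set.range fun i => (P i, -c i))} := by
  classical
  set K : Set ((EuclideanSpace ℝ (Fin n)) × ℝ) :=
    convexHull ℝ (Set.range fun i => (P i, -c i)) with hKdef
  set S : Set ℝ := {t : ℝ | (ξ, t) ∈ K} with hSdef
  have hKcompact : IsCompact K := (Set.finite_range _).isCompact_convexHull ℝ
  have hKconvex : Convex ℝ K := convex_convexHull _ _
  have hKclosed : IsClosed K := hKcompact.isClosed
  -- S nonempty via projection onto the first factor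
  have hSne : S.Nonempty := by
    have himg : (LinearMap.fst ℝ (EuclideanSpace ℝ (Fin n)) ℝ) '' K =
        convexHull ℝ ((LinearMap.fst ℝ (EuclideanSpace ℝ (Fin n)) ℝ) ''
          (Set.range fun i => (P i, -c i))) :=
      LinearMap.image_convexHull _ _
    have hrange : (LinearMap.fst ℝ (EuclideanSpace ℝ (Fin n)) ℝ) ''
        (Set.range fun i => (P i, -c i)) = Set.range P := by
      rw [← Set.range_comp]; rfl
    rw [hrange] at himg
    have : ξ ∈ (LinearMap.fst ℝ (EuclideanSpace ℝ (Fin n)) ℝ) '' K := himg ▸ hξ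
    obtain ⟨q, hqK, hq⟩ := this
    exact ⟨q.2, by simpa [hSdef, ← hq] using hqK⟩
  have hSclosed : IsClosed S :=
    hKclosed.preimage (Continuous.prodMk continuous_const continuous_id)
  have hSbdd : BddBelow S := by
    have h1 : BddBelow (Prod.snd '' K) := (hKcompact.image continuous_snd).bddBelow
    obtain ⟨b, hb⟩ := h1
    exact ⟨b, fun t ht => hb ⟨(ξ, t), ht, rfl⟩⟩
  set t0 : ℝ := sInf S with ht0def
  have ht0 : t0 ∈ S := hSclosed.csInf_mem hSne hSbdd
  -- upper bound: for any x and any t ∈ S, ⟪ξ,x⟫ - f x ≤ t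
  have hub : ∀ x : EuclideanSpace ℝ (Fin n), ∀ t ∈ S, ⟪ξ, x⟫ - f x ≤ t := by
    intro x t ht
    have hlin : IsLinearMap ℝ (fun p : (EuclideanSpace ℝ (Fin n)) × ℝ => ⟪p.1, x⟫ - p.2) := by
      constructor
      · intro p q
        simp only [Prod.fst_add, Prod.snd_add, inner_add_left]; ring
      · intro a p
        simp only [Prod.smul_fst, Prod.smul_snd, real_inner_smul_left, smul_eq_mul]; ring
    have hsub : K ⊆ {p : (EuclideanSpace ℝ (Fin n)) × ℝ | ⟪p.1, x⟫ - p.2 ≤ f x} := by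
      apply convexHull_min _ (convex_halfSpace_le hlin _)
      rintro p ⟨i, rfl⟩
      have h1 : fi i x ≤ f x := (hf x).2 ⟨i, rfl⟩
      have h2 : ⟪P i, x⟫ + c i ≤ f x := by rwa [hfi, real_inner_comm] at h1
      show ⟪P i, x⟫ - (-c i) ≤ f x
      linarith
    have h5 : ⟪ξ, x⟫ - t ≤ f x := hsub ht
    linarith
  have hbddA : BddAbove (Set.range fun x : EuclideanSpace ℝ (Fin n) => ⟪ξ, x⟫ - f x) := by
    refine ⟨t0, ?_⟩; rintro _ ⟨x, rfl⟩; exact hub x t0 ht0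
  refine le_antisymm (ciSup_le fun x => hub x t0 ht0) ?_
  by_contra hcon
  push_neg at hcon
  set s : ℝ := ⨆ x : EuclideanSpace ℝ (Fin n), (⟪ξ, x⟫ - f x) with hsdef
  have hsnot : (ξ, s) ∉ K := by
    intro h
    exact absurd (csInf_le hSbdd h) (not_le.mpr hcon)
  obtain ⟨φ, u, hu1, hu2⟩ := geometric_hahn_banach_point_closed hKconvex hKclosed hsnot
  -- decompose φ
  set a : ℝ := φ (0, 1) with hadef
  have hdecomp : ∀ (v : EuclideanSpace ℝ (Fin n)) (t : ℝ), φ (v, t) = φ (v, 0) + t * a := by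
    intro v t
    have h1 : ((v, t) : (EuclideanSpace ℝ (Fin n)) × ℝ) = (v, 0) + t • (0, 1) := by
      simp [Prod.ext_iff]
    rw [h1, map_add, map_smul]
    simp only [smul_eq_mul, hadef]
  have hapos : 0 < a := by
    have h1 : u < φ (ξ, t0) := hu2 _ ht0
    have h2 : φ (ξ, s) < u := hu1
    rw [hdecomp] at h1 h2
    by_contra hna
    push_neg at hna
    nlinarith
  have ha0 : a ≠ 0 := ne_of_gt hapos
  -- represent v ↦ φ (v, 0) by an inner product
  set ψ : EuclideanSpace ℝ (Fin n) →L[ℝ] ℝ :=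
    φ.comp (ContinuousLinearMap.inl ℝ _ _) with hψdef
  set y : EuclideanSpace ℝ (Fin n) := (InnerProductSpace.toDual ℝ _).symm ψ with hydef
  have hy : ∀ v, ⟪y, v⟫ = φ (v, 0) := by
    intro v
    have h2 : (InnerProductSpace.toDual ℝ _) y = ψ := by rw [hydef]; simp
    calc ⟪y, v⟫ = (InnerProductSpace.toDual ℝ _) y v := rfl
      _ = ψ v := by rw [h2]
      _ = φ (v, 0) := rfl
  set x : EuclideanSpace ℝ (Fin n) := -(a⁻¹ • y) with hxdef
  have hxinner : ∀ v : EuclideanSpace ℝ (Fin n), ⟪v, x⟫ = -(a⁻¹ * φ (v, 0)) := by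
    intro v
    rw [hxdef, inner_neg_right, real_inner_smul_right, real_inner_comm, hy]
  -- f x < -a⁻¹ * u
  have hfx : f x < -(a⁻¹ * u) := by
    obtain ⟨i0, hi0⟩ := (hf x).1
    have hi : u < φ (P i0, -c i0) := hu2 _ (subset_convexHull ℝ _ ⟨i0, rfl⟩)
    rw [hdecomp] at hi
    have hφ : u + c i0 * a < φ (P i0, 0) := by linarith
    have hfx_eq : f x = -(a⁻¹ * φ (P i0, 0)) + c i0 := by
      rw [← hi0]
      show fi i0 x = _
      rw [hfi, real_inner_comm, hxinner]
    rw [hfx_eq]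
    have h3 : a⁻¹ * (u + c i0 * a) < a⁻¹ * φ (P i0, 0) :=
      (mul_lt_mul_iff_right₀ (inv_pos.mpr hapos)).mpr hφ
    have h5 : a⁻¹ * (u + c i0 * a) = a⁻¹ * u + c i0 := by
      field_simp
    linarith
  -- ⟪ξ, x⟫ > s - a⁻¹ * u
  have hξx : s - a⁻¹ * u < ⟪ξ, x⟫ := by
    have h2 : φ (ξ, s) < u := hu1
    rw [hdecomp] at h2
    have h3 : a⁻¹ * φ (ξ, 0) < a⁻¹ * (u - s * a) :=
      (mul_lt_mul_iff_right₀ (inv_pos.mpr hapos)).mpr (by linarith)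
    have h5 : a⁻¹ * (u - s * a) = a⁻¹ * u - s := by
      field_simp
    rw [hxinner ξ]
    linarith
  have hle : ⟪ξ, x⟫ - f x ≤ s := le_ciSup hbddA x
  linarith
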